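/- arXiv:1206.1709 — 2 statements merged into one kernel-verified Lean document; each statement's English description precedes it below -/
import Mathlib

section
/- Let f : ℝ^d → ℝ be a C² function with compact support contained in ℝ^d ∖ {0}, let n ∈ ℕ and let 0 < ε ≤ 1. Then there is a constant c = c(f, n, ε) such that for all x_1, …, x_n, q ∈ ℝ^d: |f(x_1 + ⋯ + x_n + q) − Σ_{j=1}^n f(x_j)| ≤ c · ( |q|^ε + Σ_{i ≠ j} |x_i|^ε |x_j|^ε ). -/
lemma myRpowAdd {p : ℝ} (hp : 0 ≤ p) (hp1 : p ≤ 1) {a b : ℝ}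
    (ha : 0 ≤ a) (hb : 0 ≤ b) : (a + b) ^ p ≤ a ^ p + b ^ p := by
  have h := NNReal.rpow_add_le_add_rpow (⟨a, ha⟩ : NNReal) ⟨b, hb⟩ hp hp1
  have h2 := NNReal.coe_le_coe.2 h
  exact h2

lemma myRpowSum {ι : Type*} (s : Finset ι) (a : ι → ℝ) (ha : ∀ i ∈ s, 0 ≤ a i) {p : ℝ}
    (hp : 0 < p) (hp1 : p ≤ 1) : (∑ i ∈ s, a i) ^ p ≤ ∑ i ∈ s, a i ^ p := by
  induction s using Finset.cons_induction with
  | empty => simp [Real.zero_rpow hp.ne']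
  | cons i s hi ih =>
      rw [Finset.sum_cons, Finset.sum_cons]
      have h1 : 0 ≤ a i := ha i (Finset.mem_cons_self i s)
      have h2 : ∀ j ∈ s, 0 ≤ a j := fun j hj => ha j (Finset.mem_cons_of_mem hj)
      calc (a i + ∑ j ∈ s, a j) ^ p ≤ a i ^ p + (∑ j ∈ s, a j) ^ p :=
            myRpowAdd hp.le hp1 h1 (Finset.sum_nonneg h2)
        _ ≤ a i ^ p + ∑ j ∈ s, a j ^ p := add_le_add_right (ih h2) _

set_option maxHeartbeats 1000000 in
theorem stmt5 (d : ℕ) (f : EuclideanSpace ℝ (Fin d) → ℝ)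
    (hf : ContDiff ℝ 2 f) (hsupp : HasCompactSupport f)
    (h0 : (0 : EuclideanSpace ℝ (Fin d)) ∉ tsupport f)
    (n : ℕ) (ε : ℝ) (hε1 : 0 < ε) (hε2 : ε ≤ 1) :
    ∃ c : ℝ, ∀ (x : Fin n → EuclideanSpace ℝ (Fin d)) (q : EuclideanSpace ℝ (Fin d)),
      |f (∑ j, x j + q) - ∑ j, f (x j)|
        ≤ c * (‖q‖ ^ ε + ∑ i, ∑ j, if i ≠ j then ‖x i‖ ^ ε * ‖x j‖ ^ ε else 0) := by
  -- Lipschitz constant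
  obtain ⟨K, hK⟩ := ContDiff.lipschitzWith_of_hasCompactSupport hsupp hf two_ne_zero
  set L : ℝ := (K : ℝ) with hLdef
  have hL0 : 0 ≤ L := K.coe_nonneg
  have hlip : ∀ u v : EuclideanSpace ℝ (Fin d), |f u - f v| ≤ L * ‖u - v‖ := by
    intro u v
    have := hK.dist_le_mul u v
    rwa [Real.dist_eq, dist_eq_norm] at this
  -- bound
  obtain ⟨M, hM⟩ := hsupp.exists_bound_of_continuous hf.continuous
  have hM' : ∀ u, |f u| ≤ M := fun u => by simpa [Real.norm_eq_abs] using hM u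
  have hM0 : 0 ≤ M := le_trans (abs_nonneg _) (hM' 0)
  -- vanishing near 0
  obtain ⟨δ, hδ, hball⟩ := Metric.isOpen_iff.1 (isClosed_tsupport f).isOpen_compl 0 h0
  have hzero : ∀ u : EuclideanSpace ℝ (Fin d), ‖u‖ < δ → f u = 0 := by
    intro u hu
    exact image_eq_zero_of_notMem_tsupport (hball (mem_ball_zero_iff.2 hu))
  have f0 : f 0 = 0 := hzero 0 (by simpa using hδ)
  set r : ℝ := δ / 2 with hrdef
  have hr : 0 < r := by positivity
  set c2 : ℝ := 3 * M * r ^ (-(2 * ε)) + L * r ^ (1 - 2 * ε) with hc2def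
  have hc20 : 0 ≤ c2 := by positivity
  -- mixed-case helper
  have hmix : ∀ a b : ℝ, 0 ≤ a → a ≤ r → r ≤ b → L * a ≤ c2 * (a ^ ε * b ^ ε) := by
    intro a b ha har hrb
    have hb0 : 0 < b := lt_of_lt_of_le hr hrb
    rcases eq_or_lt_of_le ha with h | ha'
    · rw [← h]
      simp [Real.zero_rpow hε1.ne']
    · have e1 : a = a ^ ε * a ^ (1 - ε) := by
        rw [← Real.rpow_add ha', show ε + (1 - ε) = 1 by ring, Real.rpow_one]
      have e2 : a ^ (1 - ε) ≤ r ^ (1 - ε) :=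
        Real.rpow_le_rpow ha har (by linarith)
      have e3 : r ^ ε ≤ b ^ ε := Real.rpow_le_rpow hr.le hrb hε1.le
      have e4 : (1 : ℝ) ≤ b ^ ε * r ^ (-ε) := by
        rw [Real.rpow_neg hr.le, ← div_eq_mul_inv, le_div_iff₀ (Real.rpow_pos_of_pos hr ε)]
        simpa using e3
      have key : L * a ≤ (L * r ^ (1 - 2 * ε)) * (a ^ ε * b ^ ε) := by
        have h5 : r ^ (1 - ε) * r ^ (-ε) = r ^ (1 - 2 * ε) := by
          rw [← Real.rpow_add hr, show 1 - ε + -ε = 1 - 2 * ε by ring]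
        calc L * a = L * (a ^ ε * a ^ (1 - ε)) := by rw [← e1]
          _ ≤ L * (a ^ ε * r ^ (1 - ε)) :=
              mul_le_mul_of_nonneg_left
                (mul_le_mul_of_nonneg_left e2 (Real.rpow_nonneg ha ε)) hL0
          _ ≤ L * (a ^ ε * r ^ (1 - ε)) * (b ^ ε * r ^ (-ε)) :=
              le_mul_of_one_le_right
                (by positivity) e4
          _ = (L * (r ^ (1 - ε) * r ^ (-ε))) * (a ^ ε * b ^ ε) := by ring
          _ = (L * r ^ (1 - 2 * ε)) * (a ^ ε * b ^ ε) := by rw [h5]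
      refine key.trans ?_
      have : (0:ℝ) ≤ 3 * M * r ^ (-(2*ε)) := by positivity
      nlinarith [mul_nonneg (Real.rpow_nonneg ha ε) (Real.rpow_nonneg hb0.le ε)]
  -- big-case helper
  have hbig : ∀ a b : ℝ, r ≤ a → r ≤ b → 3 * M ≤ c2 * (a ^ ε * b ^ ε) := by
    intro a b hra hrb
    have e3 : r ^ ε ≤ a ^ ε := Real.rpow_le_rpow hr.le hra hε1.le
    have e4 : r ^ ε ≤ b ^ ε := Real.rpow_le_rpow hr.le hrb hε1.le
    have h5 : r ^ (-(2*ε)) * (r ^ ε * r ^ ε) = 1 := by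
      rw [← Real.rpow_add hr, ← Real.rpow_add hr, show -(2*ε) + (ε + ε) = 0 by ring,
        Real.rpow_zero]
    have hrp := Real.rpow_pos_of_pos hr ε
    have key : 3 * M ≤ (3 * M * r ^ (-(2*ε))) * (a ^ ε * b ^ ε) := by
      calc 3 * M = (3 * M * r ^ (-(2*ε))) * (r ^ ε * r ^ ε) := by
            rw [mul_assoc, h5]; ring
        _ ≤ (3 * M * r ^ (-(2*ε))) * (a ^ ε * b ^ ε) :=
            mul_le_mul_of_nonneg_left
              (mul_le_mul e3 e4 hrp.le (Real.rpow_nonneg (hr.le.trans hra) ε))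
              (by positivity)
    refine key.trans ?_
    nlinarith [mul_nonneg (Real.rpow_nonneg (hr.le.trans hra) ε) (Real.rpow_nonneg (hr.le.trans hrb) ε),
      mul_nonneg hL0 (Real.rpow_nonneg hr.le (1 - 2*ε))]
  -- two-variable estimate
  have h2 : ∀ u v : EuclideanSpace ℝ (Fin d), |f (u + v) - f u - f v| ≤ c2 * (‖u‖ ^ ε * ‖v‖ ^ ε) := by
    intro u v
    rcases lt_or_ge ‖u‖ r with hu | hu <;> rcases lt_or_ge ‖v‖ r with hv | hv
    · have huv : ‖u + v‖ < δ := by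
        calc ‖u + v‖ ≤ ‖u‖ + ‖v‖ := norm_add_le u v
          _ < r + r := by linarith
          _ = δ := by rw [hrdef]; ring
      rw [hzero u (by linarith), hzero v (by linarith), hzero _ huv]
      simp only [sub_zero, zero_sub, abs_neg, abs_zero, sub_self]
      positivity
    · rw [hzero u (by linarith)]
      have : |f (u + v) - 0 - f v| = |f (u + v) - f v| := by ring_nf
      rw [this]
      have h6 : |f (u+v) - f v| ≤ L * ‖u‖ := by
        have := hlip (u + v) v
        simpa using this
      exact h6.trans (hmix ‖u‖ ‖v‖ (norm_nonneg u) hu.le hv)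
    · rw [hzero v (by linarith)]
      have heq : f (u + v) - f u - 0 = f (u + v) - f u := by ring
      rw [heq]
      have h6 : |f (u+v) - f u| ≤ L * ‖v‖ := by
        have := hlip (u + v) u
        simpa using this
      have := hmix ‖v‖ ‖u‖ (norm_nonneg v) hv.le hu
      refine (h6.trans this).trans ?_
      rw [mul_comm (‖v‖ ^ ε)]
    · have h6 : |f (u + v) - f u - f v| ≤ 3 * M := by
        have a1 := hM' (u+v); have a2 := hM' u; have a3 := hM' v
        calc |f (u + v) - f u - f v| ≤ |f (u+v)| + |f u| + |f v| := by
              exact (abs_sub _ _).trans (by exact add_le_add_left (abs_sub _ _) _)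
          _ ≤ 3 * M := by linarith
      exact h6.trans (hbig ‖u‖ ‖v‖ hu hv)
  -- shift estimate
  set c1 : ℝ := L + 2 * M with hc1def
  have hc10 : 0 ≤ c1 := by positivity
  have h1 : ∀ u q : EuclideanSpace ℝ (Fin d), |f (u + q) - f u| ≤ c1 * ‖q‖ ^ ε := by
    intro u q
    rcases eq_or_lt_of_le (norm_nonneg q) with hq | hq
    · have : q = 0 := by rwa [eq_comm, norm_eq_zero] at hq
      simp [this, Real.zero_rpow hε1.ne']
    · rcases le_or_gt ‖q‖ 1 with hq1 | hq1
      · have e1 : ‖q‖ ≤ ‖q‖ ^ ε := by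
          calc ‖q‖ = ‖q‖ ^ (1:ℝ) := (Real.rpow_one _).symm
            _ ≤ ‖q‖ ^ ε := Real.rpow_le_rpow_of_exponent_ge hq hq1 hε2
        have h6 : |f (u + q) - f u| ≤ L * ‖q‖ := by simpa using hlip (u + q) u
        calc |f (u + q) - f u| ≤ L * ‖q‖ := h6
          _ ≤ L * ‖q‖ ^ ε := by nlinarith
          _ ≤ c1 * ‖q‖ ^ ε := by
              have := Real.rpow_nonneg (norm_nonneg q) ε
              nlinarith
      · have e1 : (1:ℝ) ≤ ‖q‖ ^ ε := Real.one_le_rpow hq1.le hε1.le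
        calc |f (u + q) - f u| ≤ |f (u+q)| + |f u| := abs_sub _ _
          _ ≤ 2 * M := by linarith [hM' (u+q), hM' u]
          _ ≤ 2 * M * ‖q‖ ^ ε := by nlinarith
          _ ≤ c1 * ‖q‖ ^ ε := by nlinarith [Real.rpow_nonneg (norm_nonneg q) ε]
  -- main induction
  have main : ∀ m : ℕ, ∃ c : ℝ, 0 ≤ c ∧ ∀ x : Fin m → EuclideanSpace ℝ (Fin d),
      |f (∑ j, x j) - ∑ j, f (x j)|
        ≤ c * ∑ i, ∑ j, if i ≠ j then ‖x i‖ ^ ε * ‖x j‖ ^ ε else 0 := by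
    intro m
    induction m with
    | zero => exact ⟨0, le_refl 0, fun x => by simp [f0]⟩
    | succ m ih =>
        obtain ⟨c, hc0, hc⟩ := ih
        refine ⟨c + c2, by positivity, fun x => ?_⟩
        set y : Fin m → EuclideanSpace ℝ (Fin d) := fun i => x i.castSucc with hy
        set z : EuclideanSpace ℝ (Fin d) := x (Fin.last m) with hz
        set S : EuclideanSpace ℝ (Fin d) := ∑ i, y i with hS
        set A : ℝ := ∑ i, ‖y i‖ ^ ε * ‖z‖ ^ ε with hA
        set B : ℝ := ∑ i, ∑ j, if i ≠ j then ‖y i‖ ^ ε * ‖y j‖ ^ ε else 0 with hB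
        have hA0 : 0 ≤ A := Finset.sum_nonneg fun i _ =>
          mul_nonneg (Real.rpow_nonneg (norm_nonneg _) ε) (Real.rpow_nonneg (norm_nonneg _) ε)
        have hB0 : 0 ≤ B := Finset.sum_nonneg fun i _ => Finset.sum_nonneg fun j _ => by
          split <;> positivity
        have hsum : ∑ j, x j = S + z := Fin.sum_univ_castSucc x
        have hfsum : ∑ j, f (x j) = (∑ i, f (y i)) + f z := Fin.sum_univ_castSucc fun j => f (x j)
        -- cross sum decomposition
        have hD : ∑ i, ∑ j, (if i ≠ j then ‖x i‖ ^ ε * ‖x j‖ ^ ε else 0)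
            = B + A + ∑ j, ‖z‖ ^ ε * ‖y j‖ ^ ε := by
          rw [Fin.sum_univ_castSucc
            (f := fun i => ∑ j, if i ≠ j then ‖x i‖ ^ ε * ‖x j‖ ^ ε else 0)]
          have inner1 : ∀ i : Fin m,
              (∑ j, if i.castSucc ≠ j then ‖x i.castSucc‖ ^ ε * ‖x j‖ ^ ε else 0)
              = (∑ j, if i ≠ j then ‖y i‖ ^ ε * ‖y j‖ ^ ε else 0) + ‖y i‖ ^ ε * ‖z‖ ^ ε := by
            intro i
            rw [Fin.sum_univ_castSucc
              (f := fun j => if i.castSucc ≠ j then ‖x i.castSucc‖ ^ ε * ‖x j‖ ^ ε else 0)]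
            congr 1
            · refine Finset.sum_congr rfl fun j _ => ?_
              simp only [ne_eq, Fin.castSucc_inj]
              rfl
            · rw [if_pos]
              exact (Fin.castSucc_lt_last i).ne
          have inner2 :
              (∑ j, if Fin.last m ≠ j then ‖x (Fin.last m)‖ ^ ε * ‖x j‖ ^ ε else 0)
              = ∑ j : Fin m, ‖z‖ ^ ε * ‖y j‖ ^ ε := by
            rw [Fin.sum_univ_castSucc
              (f := fun j => if Fin.last m ≠ j then ‖x (Fin.last m)‖ ^ ε * ‖x j‖ ^ ε else 0)]
            simp only [ne_eq, not_true_eq_false, if_false, add_zero]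
            refine Finset.sum_congr rfl fun j _ => ?_
            rw [if_pos]
            exact ((Fin.castSucc_lt_last j).ne).symm
          rw [inner2]
          rw [Finset.sum_congr rfl fun i _ => inner1 i, Finset.sum_add_distrib]
        -- estimates
        have est1 : |f (S + z) - f S - f z| ≤ c2 * A := by
          have h6 := h2 S z
          refine h6.trans ?_
          have e1 : ‖S‖ ^ ε ≤ ∑ i, ‖y i‖ ^ ε := by
            calc ‖S‖ ^ ε ≤ (∑ i, ‖y i‖) ^ ε :=
                  Real.rpow_le_rpow (norm_nonneg _) (norm_sum_le _ _) hε1.le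
              _ ≤ ∑ i, ‖y i‖ ^ ε := myRpowSum _ _ (fun i _ => norm_nonneg _) hε1 hε2
          calc c2 * (‖S‖ ^ ε * ‖z‖ ^ ε) ≤ c2 * ((∑ i, ‖y i‖ ^ ε) * ‖z‖ ^ ε) :=
                mul_le_mul_of_nonneg_left
                  (mul_le_mul_of_nonneg_right e1 (Real.rpow_nonneg (norm_nonneg z) ε)) hc20
            _ = c2 * A := by rw [hA, Finset.sum_mul]
        have est2 : |f S - ∑ i, f (y i)| ≤ c * B := hc y
        have split : f (∑ j, x j) - ∑ j, f (x j)
            = (f (S + z) - f S - f z) + (f S - ∑ i, f (y i)) := by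
          rw [hsum, hfsum]; ring
        have hC0 : 0 ≤ ∑ j, ‖z‖ ^ ε * ‖y j‖ ^ ε := Finset.sum_nonneg fun j _ => by positivity
        calc |f (∑ j, x j) - ∑ j, f (x j)|
            ≤ |f (S + z) - f S - f z| + |f S - ∑ i, f (y i)| := by
              rw [split]; exact abs_add_le _ _
          _ ≤ c2 * A + c * B := add_le_add est1 est2
          _ ≤ (c + c2) * ∑ i, ∑ j, (if i ≠ j then ‖x i‖ ^ ε * ‖x j‖ ^ ε else 0) := by
              rw [hD]; nlinarith
  -- conclusion
  obtain ⟨cn, hcn0, hcn⟩ := main n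
  refine ⟨c1 + cn, fun x q => ?_⟩
  have hD0 : 0 ≤ ∑ i, ∑ j, (if i ≠ j then ‖x i‖ ^ ε * ‖x j‖ ^ ε else 0) :=
    Finset.sum_nonneg fun i _ => Finset.sum_nonneg fun j _ => by
      split <;> positivity
  have hq0 : 0 ≤ ‖q‖ ^ ε := Real.rpow_nonneg (norm_nonneg q) ε
  have split : f (∑ j, x j + q) - ∑ j, f (x j)
      = (f (∑ j, x j + q) - f (∑ j, x j)) + (f (∑ j, x j) - ∑ j, f (x j)) := by ring
  calc |f (∑ j, x j + q) - ∑ j, f (x j)|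
      ≤ |f (∑ j, x j + q) - f (∑ j, x j)| + |f (∑ j, x j) - ∑ j, f (x j)| := by
        rw [split]; exact abs_add_le _ _
    _ ≤ c1 * ‖q‖ ^ ε + cn * ∑ i, ∑ j, (if i ≠ j then ‖x i‖ ^ ε * ‖x j‖ ^ ε else 0) :=
        add_le_add (h1 _ q) (hcn x)
    _ ≤ (c1 + cn) * (‖q‖ ^ ε + ∑ i, ∑ j, (if i ≠ j then ‖x i‖ ^ ε * ‖x j‖ ^ ε else 0)) := by
        nlinarith
end

section
/- Let R be an ℝ^d-valued random variable and s > 0. If E[|x·R|^s] = ∞ for some x ∈ ℝ^d with |x| = 1, then there exists ε > 0 such that E[|y·R|^s] = ∞ for all y in the unit sphere with |y − x| < ε. -/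
open MeasureTheory

private lemma abs_rpow_add_le (s : ℝ) (hs : 0 < s) (a b : ℝ) :
    |a + b| ^ s ≤ 2 ^ s * (|a| ^ s + |b| ^ s) := by
  have h1 : |a + b| ^ s ≤ (|a| + |b|) ^ s :=
    Real.rpow_le_rpow (abs_nonneg _) (abs_add_le a b) hs.le
  have h2 : (|a| + |b|) ^ s ≤ (2 * max |a| |b|) ^ s := by
    refine Real.rpow_le_rpow (by positivity) ?_ hs.le
    rcases le_total |a| |b| with h | h <;> simp [max_eq_right, max_eq_left, h] <;> linarith
  have h3 : (2 * max |a| |b|) ^ s = 2 ^ s * (max |a| |b|) ^ s :=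
    Real.mul_rpow (by norm_num) (le_trans (abs_nonneg a) (le_max_left _ _))
  have h4 : (max |a| |b|) ^ s ≤ |a| ^ s + |b| ^ s := by
    rcases le_total |a| |b| with h | h
    · rw [max_eq_right h]
      have := Real.rpow_nonneg (abs_nonneg a) s
      linarith
    · rw [max_eq_left h]
      have := Real.rpow_nonneg (abs_nonneg b) s
      linarith
  calc |a + b| ^ s ≤ (2 * max |a| |b|) ^ s := le_trans h1 h2
    _ = 2 ^ s * (max |a| |b|) ^ s := h3
    _ ≤ 2 ^ s * (|a| ^ s + |b| ^ s) := by
        have : (0:ℝ) ≤ 2 ^ s := Real.rpow_nonneg (by norm_num) s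
        nlinarith

theorem stmt11 {Ω : Type*} [MeasurableSpace Ω] (μ : Measure Ω) [IsProbabilityMeasure μ]
    (d : ℕ) (R : Ω → EuclideanSpace ℝ (Fin d)) (hR : Measurable R)
    (s : ℝ) (hs : 0 < s)
    (x : EuclideanSpace ℝ (Fin d)) (hx : ‖x‖ = 1)
    (hinf : ∫⁻ ω, ENNReal.ofReal (|(inner ℝ x (R ω) : ℝ)| ^ s) ∂μ = ⊤) :
    ∃ ε > (0 : ℝ), ∀ y : EuclideanSpace ℝ (Fin d), ‖y‖ = 1 → ‖y - x‖ < ε →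
      ∫⁻ ω, ENNReal.ofReal (|(inner ℝ y (R ω) : ℝ)| ^ s) ∂μ = ⊤ := by
  by_contra hcon
  push_neg at hcon
  -- measurability
  have hmeas : ∀ y : EuclideanSpace ℝ (Fin d),
      Measurable fun ω => ENNReal.ofReal (|(inner ℝ y (R ω) : ℝ)| ^ s) := by
    intro y
    have h1 : Measurable fun ω => (inner ℝ y (R ω) : ℝ) :=
      (innerSL ℝ y).continuous.measurable.comp hR
    exact (((Real.continuous_rpow_const hs.le).measurable.comp h1.abs).ennreal_ofReal)
  -- the set of y with finite moment is a submodule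
  set B : Submodule ℝ (EuclideanSpace ℝ (Fin d)) :=
    { carrier := {y | ∫⁻ ω, ENNReal.ofReal (|(inner ℝ y (R ω) : ℝ)| ^ s) ∂μ ≠ ⊤}
      zero_mem' := by
        simp only [Set.mem_setOf_eq, inner_zero_left, abs_zero, Real.zero_rpow hs.ne',
          ENNReal.ofReal_zero, lintegral_zero]
        exact ENNReal.zero_ne_top
      add_mem' := by
        intro y z hy hz
        simp only [Set.mem_setOf_eq] at hy hz ⊢
        have hb : (∫⁻ ω, ENNReal.ofReal (|(inner ℝ (y + z) (R ω) : ℝ)| ^ s) ∂μ) ≤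
            ENNReal.ofReal (2 ^ s) *
              ((∫⁻ ω, ENNReal.ofReal (|(inner ℝ y (R ω) : ℝ)| ^ s) ∂μ) +
               (∫⁻ ω, ENNReal.ofReal (|(inner ℝ z (R ω) : ℝ)| ^ s) ∂μ)) := by
          rw [← lintegral_add_left (hmeas y), ← lintegral_const_mul' _ _ ENNReal.ofReal_ne_top]
          refine lintegral_mono fun ω => ?_
          rw [inner_add_left]
          calc ENNReal.ofReal (|(inner ℝ y (R ω) : ℝ) + inner ℝ z (R ω)| ^ s)
              ≤ ENNReal.ofReal (2 ^ s * (|(inner ℝ y (R ω) : ℝ)| ^ s + |(inner ℝ z (R ω) : ℝ)| ^ s)) :=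
                ENNReal.ofReal_le_ofReal (abs_rpow_add_le s hs _ _)
            _ = ENNReal.ofReal (2 ^ s) *
                (ENNReal.ofReal (|(inner ℝ y (R ω) : ℝ)| ^ s) +
                 ENNReal.ofReal (|(inner ℝ z (R ω) : ℝ)| ^ s)) := by
                rw [ENNReal.ofReal_mul (Real.rpow_nonneg (by norm_num) s),
                  ENNReal.ofReal_add (Real.rpow_nonneg (abs_nonneg _) s)
                    (Real.rpow_nonneg (abs_nonneg _) s)]
        refine ne_top_of_le_ne_top ?_ hb
        exact ENNReal.mul_ne_top ENNReal.ofReal_ne_top (ENNReal.add_ne_top.mpr ⟨hy, hz⟩)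
      smul_mem' := by
        intro c y hy
        simp only [Set.mem_setOf_eq] at hy ⊢
        have heq : ∀ ω, ENNReal.ofReal (|(inner ℝ (c • y) (R ω) : ℝ)| ^ s) =
            ENNReal.ofReal (|c| ^ s) * ENNReal.ofReal (|(inner ℝ y (R ω) : ℝ)| ^ s) := by
          intro ω
          rw [inner_smul_left, RCLike.conj_to_real, abs_mul,
            Real.mul_rpow (abs_nonneg _) (abs_nonneg _),
            ENNReal.ofReal_mul (Real.rpow_nonneg (abs_nonneg _) s)]
        simp only [heq]
        rw [lintegral_const_mul' _ _ ENNReal.ofReal_ne_top]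
        exact ENNReal.mul_ne_top ENNReal.ofReal_ne_top hy } with hB
  -- x is in the closure of B
  have hxB : x ∈ closure (B : Set (EuclideanSpace ℝ (Fin d))) := by
    rw [Metric.mem_closure_iff]
    intro ε hε
    obtain ⟨y, hy1, hy2, hy3⟩ := hcon ε hε
    exact ⟨y, hy3, by rwa [dist_comm, dist_eq_norm]⟩
  have hclosed : IsClosed (B : Set (EuclideanSpace ℝ (Fin d))) :=
    Submodule.closed_of_finiteDimensional B
  rw [hclosed.closure_eq] at hxB
  exact hxB hinf
end
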